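/- Let U be an ℓ×ℓ complex unitary matrix with spectral decomposition U = Σ_{r=1}^m λ_r F_r, and suppose every entry of U is a rational number. Then every entry of the average mixing matrix M̂ = Σ_r F_r ∘ conj(F_r) is a rational number. -/

import Mathlib

open Matrix Finset

/-- The average mixing matrix `M̂ = ∑ r, F_r ∘ conj(F_r)` of a quantum walk with
spectral idempotents `F_r`, where `∘` is the entrywise (Hadamard) product and
`conj` is entrywise complex conjugation. -/
noncomputable def avgMix {ℓ m : ℕ} (F : Fin m → Matrix (Fin ℓ) (Fin ℓ) ℂ) :
    Matrix (Fin ℓ) (Fin ℓ) ℂ :=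
  ∑ r, Matrix.hadamard (F r) ((F r).map (starRingEnd ℂ))

/-- If every entry of U is rational, then every entry of M̂ is rational. -/
theorem avgMix_rational (ℓ m : ℕ) (hℓ : 0 < ℓ)
    (U : Matrix (Fin ℓ) (Fin ℓ) ℂ)
    (hU : U ∈ Matrix.unitaryGroup (Fin ℓ) ℂ)
    (lam : Fin m → ℂ) (F : Fin m → Matrix (Fin ℓ) (Fin ℓ) ℂ)
    (hdist : Function.Injective lam)
    (hmod : ∀ r, ‖lam r‖ = 1)
    (hherm : ∀ r, (F r)ᴴ = F r)
    (hidem : ∀ r, F r * F r = F r)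
    (horth : ∀ r s, r ≠ s → F r * F s = 0)
    (hsum : ∑ r, F r = 1)
    (hspec : U = ∑ r, lam r • F r)
    (hrat : ∀ i j, ∃ q : ℚ, U i j = (q : ℂ)) :
    ∀ i j, ∃ q : ℚ, avgMix F i j = (q : ℂ) := by
  classical
  intro i j
  choose qe hq using hrat
  set U₀ : Matrix (Fin ℓ) (Fin ℓ) ℚ := Matrix.of qe with hU₀def
  have hmap : U₀.map (algebraMap ℚ ℂ) = U := by
    ext a b
    simp [Matrix.map_apply, hU₀def, hq a b]
  -- basic spectral facts
  have hUF : ∀ r, U * F r = lam r • F r := by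
    intro r
    rw [hspec, Finset.sum_mul, Finset.sum_eq_single r]
    · rw [smul_mul_assoc, hidem r]
    · intro s _ hs
      rw [smul_mul_assoc, horth s r hs, smul_zero]
    · simp
  have hFU : ∀ r, F r * U = lam r • F r := by
    intro r
    rw [hspec, Finset.mul_sum, Finset.sum_eq_single r]
    · rw [mul_smul_comm, hidem r]
    · intro s _ hs
      rw [mul_smul_comm, horth r s (Ne.symm hs), smul_zero]
    · simp
  have hlamsub : ∀ r s : Fin m, r ≠ s → lam r - lam s ≠ 0 := fun r s h =>
    sub_ne_zero_of_ne (fun he => h (hdist he))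
  -- the compression Φ(X) = ∑ r, F r * X * F r fixes matrices commuting with U
  have hcomm_fix : ∀ Xc : Matrix (Fin ℓ) (Fin ℓ) ℂ, U * Xc = Xc * U →
      ∑ r, F r * Xc * F r = Xc := by
    intro Xc hX
    have hcross : ∀ r s : Fin m, r ≠ s → F r * Xc * F s = 0 := by
      intro r s hrs
      have h1 : lam r • (F r * Xc * F s) = lam s • (F r * Xc * F s) := by
        calc lam r • (F r * Xc * F s) = (lam r • F r) * Xc * F s := by
              rw [smul_mul_assoc, smul_mul_assoc]
          _ = F r * U * Xc * F s := by rw [hFU]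
          _ = F r * (Xc * U) * F s := by rw [mul_assoc (F r) U Xc, hX]
          _ = F r * Xc * (U * F s) := by rw [mul_assoc, mul_assoc, mul_assoc]
          _ = lam s • (F r * Xc * F s) := by
              rw [hUF, mul_smul_comm, mul_assoc]
      have h2 : (lam r - lam s) • (F r * Xc * F s) = 0 := by
        rw [sub_smul, h1, sub_self]
      exact (smul_eq_zero.mp h2).resolve_left (hlamsub r s hrs)
    have h1 : Xc = (∑ r, F r) * Xc * (∑ s, F s) := by
      rw [hsum, one_mul, mul_one]
    calc ∑ r, F r * Xc * F r
        = ∑ r, ∑ s, F r * Xc * F s := by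
          refine Finset.sum_congr rfl fun r _ => ?_
          rw [Finset.sum_eq_single r]
          · intro s _ hs; exact hcross r s (Ne.symm hs)
          · simp
      _ = (∑ r, F r) * Xc * (∑ s, F s) := by
          rw [Finset.sum_mul, Finset.sum_mul]
          refine Finset.sum_congr rfl fun r _ => ?_
          rw [Finset.mul_sum]
      _ = Xc := h1.symm
  -- the compression kills commutators with U
  have hcomm_zero : ∀ Yc : Matrix (Fin ℓ) (Fin ℓ) ℂ,
      ∑ r, F r * (U * Yc - Yc * U) * F r = 0 := by
    intro Yc
    refine Finset.sum_eq_zero fun r _ => ?_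
    have : F r * (U * Yc - Yc * U) * F r
        = F r * U * Yc * F r - F r * Yc * (U * F r) := by
      noncomm_ring
    rw [this, hFU, hUF, smul_mul_assoc, smul_mul_assoc, mul_smul_comm, sub_self]
  -- key: a rational-structure argument kernel lemma over ℂ
  have key : ∀ Xc Yc : Matrix (Fin ℓ) (Fin ℓ) ℂ, U * Xc = Xc * U →
      Xc = U * Yc - Yc * U → Xc = 0 := by
    intro Xc Yc h1 h2
    have := hcomm_fix Xc h1
    rw [h2] at this ⊢
    rw [← this, hcomm_zero]
  -- the rational commutator map
  let T : Matrix (Fin ℓ) (Fin ℓ) ℚ →ₗ[ℚ] Matrix (Fin ℓ) (Fin ℓ) ℚ :=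
    { toFun := fun X => U₀ * X - X * U₀
      map_add' := by intro X Y; noncomm_ring
      map_smul' := by
        intro c X
        simp [mul_smul_comm, smul_mul_assoc, smul_sub] }
  let ψ : Matrix (Fin ℓ) (Fin ℓ) ℚ →+* Matrix (Fin ℓ) (Fin ℓ) ℂ :=
    (algebraMap ℚ ℂ).mapMatrix
  have hψ : ∀ A : Matrix (Fin ℓ) (Fin ℓ) ℚ, ψ A = A.map (algebraMap ℚ ℂ) := fun A => rfl
  have hψinj : Function.Injective ψ := by
    intro A B hAB
    ext a b
    have : A.map (algebraMap ℚ ℂ) a b = B.map (algebraMap ℚ ℂ) a b := by rw [← hψ, ← hψ, hAB]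
    simpa [Matrix.map_apply] using this
  -- disjointness of kernel and range of T
  have hdisj : Disjoint (LinearMap.ker T) (LinearMap.range T) := by
    rw [Submodule.disjoint_def]
    intro X hXk hXr
    obtain ⟨Y, hY⟩ := hXr
    have hXk' : U₀ * X - X * U₀ = 0 := hXk
    have hY' : U₀ * Y - Y * U₀ = X := hY
    have hc1 : U * ψ X = ψ X * U := by
      have := sub_eq_zero.mp hXk'
      have h := congrArg ψ this
      rw [_root_.map_mul, _root_.map_mul, hψ, hmap] at h
      exact h
    have hc2 : ψ X = U * ψ Y - ψ Y * U := by
      have h := congrArg ψ hY'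
      rw [map_sub, _root_.map_mul, _root_.map_mul, hψ U₀, hmap] at h
      exact h.symm
    have : ψ X = 0 := key (ψ X) (ψ Y) hc1 hc2
    have h0 : ψ X = ψ 0 := by rw [this, map_zero]
    exact hψinj h0
  -- kernel and range span everything
  have hsup : LinearMap.ker T ⊔ LinearMap.range T = ⊤ := by
    apply Submodule.eq_top_of_finrank_eq
    have hd := LinearMap.finrank_range_add_finrank_ker T
    have hie := Submodule.finrank_sup_add_finrank_inf_eq (LinearMap.ker T) (LinearMap.range T)
    rw [disjoint_iff.mp hdisj, finrank_bot, add_zero] at hie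
    omega
  -- decompose the standard basis matrix
  have hmem : Matrix.single j j (1 : ℚ) ∈ LinearMap.ker T ⊔ LinearMap.range T := by
    rw [hsup]; trivial
  rw [Submodule.mem_sup] at hmem
  obtain ⟨K, hK, Z, hZ, hKZ⟩ := hmem
  obtain ⟨Y, hY⟩ := hZ
  -- transfer to ℂ
  have hKcomm : U * ψ K = ψ K * U := by
    have hK' : U₀ * K - K * U₀ = 0 := hK
    have := sub_eq_zero.mp hK'
    have h := congrArg ψ this
    rw [_root_.map_mul, _root_.map_mul, hψ U₀, hmap] at h
    exact h
  have hEdec : ψ (Matrix.single j j (1 : ℚ))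
      = ψ K + (U * ψ Y - ψ Y * U) := by
    have h := congrArg ψ hKZ
    rw [map_add] at h
    rw [← h]
    congr 1
    have hY' : U₀ * Y - Y * U₀ = Z := hY
    have h2 := congrArg ψ hY'
    rw [map_sub, _root_.map_mul, _root_.map_mul, hψ U₀, hmap] at h2
    exact h2.symm
  -- compression of the standard basis matrix equals ψ K
  have hcompr : ∑ r, F r * ψ (Matrix.single j j (1 : ℚ)) * F r = ψ K := by
    rw [hEdec]
    have hsplit : ∀ r : Fin m,
        F r * (ψ K + (U * ψ Y - ψ Y * U)) * F r
          = F r * ψ K * F r + F r * (U * ψ Y - ψ Y * U) * F r := by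
      intro r; noncomm_ring
    rw [Finset.sum_congr rfl fun r _ => hsplit r, Finset.sum_add_distrib,
      hcomm_fix (ψ K) hKcomm, hcomm_zero, add_zero]
  -- the std basis matrix maps to the ℂ one
  have hEstd : ψ (Matrix.single j j (1 : ℚ)) = Matrix.single j j (1 : ℂ) := by
    ext a b
    simp [hψ, Matrix.map_apply, Matrix.single, apply_ite]
  -- entrywise computation
  have hentry : ∀ r : Fin m,
      (F r * Matrix.single j j (1 : ℂ) * F r) i i = F r i j * F r j i := by
    intro r
    rw [Matrix.mul_apply]
    have hterm : ∀ b : Fin ℓ, (F r * Matrix.single j j (1 : ℂ)) i b * F r b i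
        = if j = b then F r i j * F r b i else 0 := by
      intro b
      rw [Matrix.mul_apply]
      by_cases hb : j = b
      · subst hb
        rw [if_pos rfl, Finset.sum_eq_single j]
        · simp [Matrix.single]
        · intro c _ hc; simp [Matrix.single, Ne.symm hc]
        · simp
      · rw [if_neg hb]
        have hz : ∀ c, F r i c * Matrix.single j j (1 : ℂ) c b = 0 := by
          intro c; simp [Matrix.single, hb]
        rw [Finset.sum_congr rfl (fun c _ => hz c), Finset.sum_const_zero, zero_mul]
    rw [Finset.sum_congr rfl (fun b _ => hterm b), Finset.sum_ite_eq]
    simp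
  have hconj : ∀ r : Fin m, F r j i = (starRingEnd ℂ) (F r i j) := by
    intro r
    conv_lhs => rw [← hherm r]
    rfl
  refine ⟨K i i, ?_⟩
  have hfinal : avgMix F i j = (∑ r, F r * ψ (Matrix.single j j (1 : ℚ)) * F r) i i := by
    rw [hEstd, Matrix.sum_apply]
    unfold avgMix
    rw [Matrix.sum_apply]
    refine Finset.sum_congr rfl fun r _ => ?_
    rw [hentry r, Matrix.hadamard_apply, Matrix.map_apply, hconj r]
  rw [hfinal, hcompr, hψ, Matrix.map_apply]
  simp
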